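/- Let R be an indecomposable commutative ring with unit and G a Hausdorff ample groupoid. Let m be an element of the convolution algebra RG admitting m' with mm'm = m, m'mm' = m', and mD(G)m' ∪ m'D(G)m ⊆ D(G). Then m'm is the characteristic function of d(supp(m)) and mm' is the characteristic function of r(supp(m)). -/

import Mathlib

/-- A topological groupoid whose arrows form the space `A`; objects are identified
with identity arrows via the source map. All structure maps are continuous and the
source map is a local homeomorphism (étale). -/
structure AmpleGroupoid (A : Type*) [TopologicalSpace A] where
  src : A → A
  rng : A → A
  comp : A → A → A
  inv : A → A
  src_src : ∀ a, src (src a) = src a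
  rng_src : ∀ a, rng (src a) = src a
  src_rng : ∀ a, src (rng a) = rng a
  rng_rng : ∀ a, rng (rng a) = rng a
  src_comp : ∀ a b, src a = rng b → src (comp a b) = src b
  rng_comp : ∀ a b, src a = rng b → rng (comp a b) = rng a
  comp_assoc : ∀ a b c, src a = rng b → src b = rng c →
    comp (comp a b) c = comp a (comp b c)
  id_comp : ∀ a, comp (rng a) a = a
  comp_id : ∀ a, comp a (src a) = a
  inv_comp : ∀ a, comp (inv a) a = src a
  comp_inv : ∀ a, comp a (inv a) = rng a
  src_inv : ∀ a, src (inv a) = rng a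
  rng_inv : ∀ a, rng (inv a) = src a
  continuous_inv : Continuous inv
  continuous_comp : Continuous fun p : {p : A × A // src p.1 = rng p.2} =>
    comp p.1.1 p.1.2
  isLocalHomeomorph_src : IsLocalHomeomorph src
  isLocalHomeomorph_rng : IsLocalHomeomorph rng

namespace AmpleGroupoid

variable {A : Type*} [TopologicalSpace A] (G : AmpleGroupoid A)

/-- The unit space (identity arrows). -/
def units : Set A := Set.range G.src

/-- The unit space has a basis of compact open sets (ampleness). -/
def AmpleUnits : Prop := ∀ U : Set A, IsOpen U → ∀ a ∈ U ∩ G.units,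
  ∃ K : Set A, IsCompact K ∧ IsOpen K ∧ a ∈ K ∧ K ⊆ U ∩ G.units

/-- The unit space is Hausdorff. -/
def UnitsT2 : Prop := ∀ a ∈ G.units, ∀ b ∈ G.units, a ≠ b →
  ∃ U V : Set A, IsOpen U ∧ IsOpen V ∧ a ∈ U ∧ b ∈ V ∧ Disjoint U V

/-- A (open) local bisection: an open set on which both `src` and `rng` are injective. -/
def IsBisection (U : Set A) : Prop :=
  IsOpen U ∧ Set.InjOn G.src U ∧ Set.InjOn G.rng U

/-- Pointwise product of subsets of arrows. -/
def setMul (U V : Set A) : Set A :=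
  {c | ∃ a ∈ U, ∃ b ∈ V, G.src a = G.rng b ∧ c = G.comp a b}

/-- Pointwise inverse of a subset of arrows. -/
def setInv (U : Set A) : Set A := G.inv '' U

/-- Members of `Γ_c(G)`: compact open local bisections. -/
def Gamma (U : Set A) : Prop := IsCompact U ∧ G.IsBisection U

end AmpleGroupoid

namespace AmpleGroupoid

variable {A : Type*} [TopologicalSpace A] {R : Type*} [CommRing R]

/-- The convolution product on `R`-valued functions on the arrow space:
`(f * g)(γ) = Σ_{d(α) = d(γ)} f(γα⁻¹) g(α)`. -/
noncomputable def conv (G : AmpleGroupoid A) (f g : A → R) : A → R :=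
  fun γ => ∑ᶠ (α : A) (_ : G.src α = G.src γ), f (G.comp γ (G.inv α)) * g α

/-- Membership in the convolution algebra `RG`: locally constant with compact
support. -/
def InRG (f : A → R) : Prop :=
  IsLocallyConstant f ∧ IsCompact (Function.support f)

/-- Membership in the diagonal subalgebra `D(G)`: an element of `RG` supported on
the unit space. -/
def InDiag (G : AmpleGroupoid A) (f : A → R) : Prop :=
  InRG f ∧ Function.support f ⊆ G.units

/-- The isotropy bundle: arrows with equal source and range. -/
def iso (G : AmpleGroupoid A) : Set A := {a | G.src a = G.rng a}

end AmpleGroupoid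

namespace AmpleGroupoid

variable {A : Type*} [TopologicalSpace A] (G : AmpleGroupoid A)

lemma src_unit {u : A} (h : u ∈ G.units) : G.src u = u := by
  obtain ⟨a, rfl⟩ := h; exact G.src_src a

lemma rng_unit {u : A} (h : u ∈ G.units) : G.rng u = u := by
  obtain ⟨a, rfl⟩ := h; exact G.rng_src a

lemma src_mem_units (a : A) : G.src a ∈ G.units := ⟨a, rfl⟩

lemma rng_mem_units (a : A) : G.rng a ∈ G.units := ⟨G.inv a, G.src_inv a⟩

lemma inv_unit {u : A} (h : u ∈ G.units) : G.inv u = u := by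
  have h1 : G.src (G.inv u) = u := by rw [G.src_inv, G.rng_unit h]
  have h2 := G.comp_id (G.inv u)
  rw [h1] at h2
  have h3 : G.comp (G.inv u) u = G.src u := G.inv_comp u
  rw [h2] at h3; rw [h3, G.src_unit h]

lemma inv_inv (a : A) : G.inv (G.inv a) = a := by
  have key : G.comp (G.comp (G.inv (G.inv a)) (G.inv a)) a = a := by
    rw [G.inv_comp (G.inv a), G.src_inv, G.id_comp]
  rw [G.comp_assoc _ _ _ (by rw [G.src_inv, G.rng_inv]) (G.src_inv a),
    G.inv_comp a] at key
  have : G.comp (G.inv (G.inv a)) (G.src a) = G.inv (G.inv a) := by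
    have := G.comp_id (G.inv (G.inv a))
    rwa [G.src_inv, G.rng_inv] at this
  rw [this] at key; exact key

lemma comp_inv_cancel {a b : A} (h : G.src a = G.rng b) :
    G.comp (G.comp a b) (G.inv b) = a := by
  rw [G.comp_assoc a b (G.inv b) h (by rw [G.rng_inv]), G.comp_inv, ← h, G.comp_id]

lemma comp_inv_cancel' {γ α : A} (h : G.src α = G.src γ) :
    G.comp (G.comp γ (G.inv α)) α = γ := by
  rw [G.comp_assoc γ (G.inv α) α (by rw [G.rng_inv, h]) (G.src_inv α),
    G.inv_comp, h, G.comp_id]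

lemma inv_comp_rev {a b : A} (h : G.src a = G.rng b) :
    G.inv (G.comp a b) = G.comp (G.inv b) (G.inv a) := by
  set x := G.comp a b with hx
  set z := G.comp (G.inv b) (G.inv a) with hz
  have hsx : G.src x = G.src b := G.src_comp a b h
  have hrx : G.rng x = G.rng a := G.rng_comp a b h
  have hrz : G.rng z = G.src b := by
    rw [hz, G.rng_comp _ _ (by rw [G.src_inv, G.rng_inv, h]), G.rng_inv]
  have hxz : G.comp x z = G.rng x := by
    have e1 : G.comp x z = G.comp (G.comp x (G.inv b)) (G.inv a) := by
      rw [G.comp_assoc x (G.inv b) (G.inv a) (by rw [G.rng_inv, hsx])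
        (by rw [G.src_inv, G.rng_inv, h])]
    rw [e1, hx, G.comp_inv_cancel h, G.comp_inv, hrx]
  have e2 : G.inv x = G.comp (G.inv x) (G.rng x) := by
    have := G.comp_id (G.inv x); rw [G.src_inv] at this; exact this.symm
  rw [e2, ← hxz, ← G.comp_assoc (G.inv x) x z (G.src_inv x) (by rw [hsx, hrz]),
    G.inv_comp, hsx, ← hrz, G.id_comp]

lemma comp_eq_right_iff {γ α β : A} (hα : G.src α = G.src γ) (hβ : G.src β = G.src γ)
    (h : G.comp γ (G.inv α) = G.comp γ (G.inv β)) : α = β := by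
  have e1 : G.comp (G.inv (G.comp γ (G.inv α))) γ = α := by
    rw [G.inv_comp_rev (by rw [G.rng_inv, hα]), G.inv_inv]
    exact G.comp_inv_cancel' hα.symm
  have e2 : G.comp (G.inv (G.comp γ (G.inv β))) γ = β := by
    rw [G.inv_comp_rev (by rw [G.rng_inv, hβ]), G.inv_inv]
    exact G.comp_inv_cancel' hβ.symm
  rw [← e1, h, e2]

end AmpleGroupoid
section Helpers

variable {A : Type*} {R : Type*} [CommRing R]

lemma finsum_mem_eq_finset_sum (g : A → R) (s : Set A) (t : Finset A)
    (h1 : ∀ β ∈ s, g β ≠ 0 → β ∈ t) (h2 : ∀ β ∈ t, β ∈ s) :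
    ∑ᶠ β ∈ s, g β = ∑ β ∈ t, g β := by
  rw [← finsum_mem_coe_finset]
  apply finsum_mem_inter_support_eq
  ext β
  simp only [Set.mem_inter_iff, Function.mem_support, Finset.coe_sort_coe,
    Finset.mem_coe]
  exact ⟨fun ⟨hb, hg⟩ => ⟨h1 β hb hg, hg⟩, fun ⟨hb, hg⟩ => ⟨h2 β hb, hg⟩⟩

end Helpers

namespace AmpleGroupoid

variable {A : Type*} [TopologicalSpace A] {R : Type*} [CommRing R]
variable (G : AmpleGroupoid A)

lemma conv_apply (f g : A → R) (γ : A) :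
    G.conv f g γ = ∑ᶠ α ∈ {α | G.src α = G.src γ}, f (G.comp γ (G.inv α)) * g α :=
  rfl

lemma fiber_finite [T2Space A] {f : A → R} (hf : IsCompact (Function.support f))
    (x : A) : (Function.support f ∩ G.src ⁻¹' {x}).Finite := by
  set S := Function.support f ∩ G.src ⁻¹' {x} with hS
  have hcl : IsClosed (G.src ⁻¹' {x}) :=
    isClosed_singleton.preimage G.isLocalHomeomorph_src.continuous
  have hK : IsCompact S := hf.inter_right hcl
  have hU : ∀ a : A, a ∈ S → ∃ U : Set A, IsOpen U ∧ a ∈ U ∧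
      ∀ b ∈ U, G.src b = x → b = a := by
    intro a ha
    obtain ⟨e, hae, hfe⟩ := G.isLocalHomeomorph_src a
    refine ⟨e.source, e.open_source, hae, fun b hb hbx => ?_⟩
    apply e.injOn hb hae
    have hax : G.src a = x := ha.2
    rw [← hfe, hbx, hax]
  choose U hUo hUa hUs using hU
  obtain ⟨t, ht⟩ := hK.elim_finite_subcover (fun a : S => U a a.2)
    (fun a => hUo a a.2) (fun y hy => Set.mem_iUnion.2 ⟨⟨y, hy⟩, hUa y hy⟩)
  apply Set.Finite.subset ((t.finite_toSet).image (fun a : S => (a : A)))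
  intro y hy
  obtain ⟨a, hat, hya⟩ := Set.mem_iUnion₂.1 (ht hy)
  have : y = a := hUs a a.2 y hya hy.2
  exact ⟨a, hat, this.symm⟩

lemma conv_diag_right (f d : A → R) (hd : Function.support d ⊆ G.units)
    (γ : A) : G.conv f d γ = f γ * d (G.src γ) := by
  have := finsum_eq_single
    (fun α => ∑ᶠ _ : G.src α = G.src γ, f (G.comp γ (G.inv α)) * d α) (G.src γ)
    (fun α hne => by
      classical
      simp only [finsum_eq_if]
      split_ifs with h
      · rcases eq_or_ne (d α) 0 with h0 | h0
        · rw [h0, mul_zero]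
        · exact absurd ((G.src_unit (hd h0)).symm.trans h) hne
      · rfl)
  classical
  rw [conv, this]
  simp only [finsum_eq_if]
  rw [if_pos (G.src_src γ), G.inv_unit (G.src_mem_units γ), G.comp_id]

lemma conv_diag_left (d f : A → R) (hd : Function.support d ⊆ G.units)
    (γ : A) : G.conv d f γ = d (G.rng γ) * f γ := by
  have := finsum_eq_single
    (fun α => ∑ᶠ _ : G.src α = G.src γ, d (G.comp γ (G.inv α)) * f α) γ
    (fun α hne => by
      classical
      simp only [finsum_eq_if]
      split_ifs with h
      · rcases eq_or_ne (d (G.comp γ (G.inv α))) 0 with h0 | h0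
        · rw [h0, zero_mul]
        · exfalso
          have hu := G.src_unit (hd h0)
          have hsrc : G.src (G.comp γ (G.inv α)) = G.rng α :=
            (G.src_comp γ (G.inv α) (by rw [G.rng_inv, h])).trans (G.src_inv α)
          have hcα : G.comp γ (G.inv α) = G.rng α := hu.symm.trans hsrc
          have hγα : γ = α := by
            rw [← G.comp_inv_cancel' h, hcα, G.id_comp]
          exact hne hγα.symm
      · rfl)
  classical
  rw [conv, this]
  simp only [finsum_eq_if]
  rw [if_pos trivial, G.comp_inv]

end AmpleGroupoid
namespace AmpleGroupoid

variable {A : Type*} [TopologicalSpace A] {R : Type*} [CommRing R]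
variable (G : AmpleGroupoid A)

lemma conv_assoc (a b c : A → R)
    (hb : ∀ x, (Function.support b ∩ G.src ⁻¹' {x}).Finite)
    (hc : ∀ x, (Function.support c ∩ G.src ⁻¹' {x}).Finite) :
    G.conv (G.conv a b) c = G.conv a (G.conv b c) := by
  classical
  funext γ
  set x := G.src γ with hx
  set F : Finset A := (hc x).toFinset with hF
  set Gb : A → Finset A := fun β => (hb (G.rng β)).toFinset with hGb
  have hmemF : ∀ β, β ∈ F ↔ c β ≠ 0 ∧ G.src β = x := by
    intro β
    rw [hF, Set.Finite.mem_toFinset]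
    simp [Function.mem_support]
  have hmemGb : ∀ β α, α ∈ Gb β ↔ b α ≠ 0 ∧ G.src α = G.rng β := by
    intro β α
    rw [hGb, Set.Finite.mem_toFinset]
    simp [Function.mem_support]
  -- left side
  have hsrcδ : ∀ β, G.src β = x → G.src (G.comp γ (G.inv β)) = G.rng β :=
    fun β hβ => (G.src_comp γ (G.inv β) (by rw [G.rng_inv, hβ])).trans (G.src_inv β)
  have L1 : G.conv (G.conv a b) c γ =
      ∑ β ∈ F, G.conv a b (G.comp γ (G.inv β)) * c β := by
    rw [conv_apply]
    apply finsum_mem_eq_finset_sum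
    · intro β hβ hne
      rw [hmemF]
      exact ⟨fun h0 => hne (by rw [h0, mul_zero]), hβ⟩
    · intro β hβ
      exact ((hmemF β).1 hβ).2
  have L2 : ∀ β ∈ F, G.conv a b (G.comp γ (G.inv β)) =
      ∑ α ∈ Gb β, a (G.comp (G.comp γ (G.inv β)) (G.inv α)) * b α := by
    intro β hβ
    obtain ⟨hcβ, hβx⟩ := (hmemF β).1 hβ
    rw [conv_apply]
    apply finsum_mem_eq_finset_sum
    · intro α hα hne
      rw [hmemGb]
      refine ⟨fun h0 => hne (by rw [h0, mul_zero]), ?_⟩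
      rw [Set.mem_setOf_eq] at hα
      rw [hα, hsrcδ β hβx]
    · intro α hα
      have := ((hmemGb β α).1 hα).2
      rw [Set.mem_setOf_eq, this, hsrcδ β hβx]
  -- right side
  set D : Finset A := F.biUnion (fun β => (Gb β).image (fun α => G.comp α β)) with hD
  have hmemD : ∀ δ, δ ∈ D → G.src δ = x := by
    intro δ hδ
    rw [hD, Finset.mem_biUnion] at hδ
    obtain ⟨β, hβ, hδ⟩ := hδ
    rw [Finset.mem_image] at hδ
    obtain ⟨α, hα, rfl⟩ := hδ
    rw [G.src_comp α β ((hmemGb β α).1 hα).2]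
    exact ((hmemF β).1 hβ).2
  have R1 : G.conv a (G.conv b c) γ =
      ∑ δ ∈ D, a (G.comp γ (G.inv δ)) * G.conv b c δ := by
    rw [conv_apply]
    apply finsum_mem_eq_finset_sum
    · intro δ hδ hne
      rw [Set.mem_setOf_eq] at hδ
      have hbc : G.conv b c δ ≠ 0 := fun h0 => hne (by rw [h0, mul_zero])
      rw [conv_apply] at hbc
      obtain ⟨β, hβs, hβne⟩ := exists_ne_zero_of_finsum_mem_ne_zero hbc
      rw [Set.mem_setOf_eq] at hβs
      have hcβ : c β ≠ 0 := fun h0 => hβne (by rw [h0, mul_zero])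
      have hbα : b (G.comp δ (G.inv β)) ≠ 0 := fun h0 => hβne (by rw [h0, zero_mul])
      have hβF : β ∈ F := (hmemF β).2 ⟨hcβ, hβs.trans hδ⟩
      have hαG : G.comp δ (G.inv β) ∈ Gb β := by
        rw [hmemGb]
        refine ⟨hbα, ?_⟩
        rw [G.src_comp δ (G.inv β) (by rw [G.rng_inv, hβs]), G.src_inv]
      rw [hD, Finset.mem_biUnion]
      exact ⟨β, hβF, Finset.mem_image.2 ⟨_, hαG, G.comp_inv_cancel' hβs⟩⟩
    · exact fun δ hδ => hmemD δ hδ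
  have R2 : ∀ δ ∈ D, G.conv b c δ = ∑ β ∈ F, b (G.comp δ (G.inv β)) * c β := by
    intro δ hδ
    rw [conv_apply]
    apply finsum_mem_eq_finset_sum
    · intro β hβ hne
      rw [Set.mem_setOf_eq] at hβ
      rw [hmemF]
      exact ⟨fun h0 => hne (by rw [h0, mul_zero]), hβ.trans (hmemD δ hδ)⟩
    · intro β hβ
      rw [Set.mem_setOf_eq, ((hmemF β).1 hβ).2, hmemD δ hδ]
  have R3 : G.conv a (G.conv b c) γ =
      ∑ β ∈ F, ∑ δ ∈ D, a (G.comp γ (G.inv δ)) * (b (G.comp δ (G.inv β)) * c β) := by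
    rw [R1, Finset.sum_congr rfl (fun δ hδ => by rw [R2 δ hδ, Finset.mul_sum]),
      Finset.sum_comm]
  -- fixed β: reduce sum over D to sum over Gb β
  have key : ∀ β ∈ F,
      ∑ δ ∈ D, a (G.comp γ (G.inv δ)) * (b (G.comp δ (G.inv β)) * c β) =
      ∑ α ∈ Gb β, a (G.comp (G.comp γ (G.inv β)) (G.inv α)) * b α * c β := by
    intro β hβ
    obtain ⟨hcβ, hβx⟩ := (hmemF β).1 hβ
    have hEsub : (Gb β).image (fun α => G.comp α β) ⊆ D := by
      intro δ hδ
      rw [hD, Finset.mem_biUnion]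
      exact ⟨β, hβ, hδ⟩
    rw [← Finset.sum_subset hEsub ?hzero]
    · rw [Finset.sum_image ?hinj]
      · apply Finset.sum_congr rfl
        intro α hα
        obtain ⟨hbα, hαβ⟩ := (hmemGb β α).1 hα
        have e1 : G.comp (G.comp α β) (G.inv β) = α := G.comp_inv_cancel hαβ
        have e2 : G.comp γ (G.inv (G.comp α β)) =
            G.comp (G.comp γ (G.inv β)) (G.inv α) := by
          rw [G.inv_comp_rev hαβ,
            ← G.comp_assoc γ (G.inv β) (G.inv α) (by rw [G.rng_inv, hβx])
              (by rw [G.src_inv, G.rng_inv, hαβ])]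
        rw [e1, e2, mul_assoc]
      case hinj =>
        intro α hα α' hα' heq
        have e1 : G.comp (G.comp α β) (G.inv β) = α :=
          G.comp_inv_cancel ((hmemGb β α).1 hα).2
        have e2 : G.comp (G.comp α' β) (G.inv β) = α' :=
          G.comp_inv_cancel ((hmemGb β α').1 hα').2
        rw [← e1, show G.comp α β = G.comp α' β from heq, e2]
    case hzero =>
      intro δ hδD hδE
      rcases eq_or_ne (b (G.comp δ (G.inv β))) 0 with h0 | h0
      · rw [h0, zero_mul, mul_zero]
      · exfalso
        apply hδE
        have hδx := hmemD δ hδD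
        have hαG : G.comp δ (G.inv β) ∈ Gb β := by
          rw [hmemGb]
          refine ⟨h0, ?_⟩
          rw [G.src_comp δ (G.inv β) (by rw [G.rng_inv, hβx, hδx]), G.src_inv]
        exact Finset.mem_image.2 ⟨_, hαG, G.comp_inv_cancel' (hβx.trans hδx.symm)⟩
  rw [L1, R3]
  rw [Finset.sum_congr rfl (fun β hβ => by rw [L2 β hβ, Finset.sum_mul]),
    Finset.sum_congr rfl key]

end AmpleGroupoid
namespace AmpleGroupoid

variable {A : Type*} [TopologicalSpace A] {R : Type*} [CommRing R]
variable (G : AmpleGroupoid A)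

lemma isOpen_units : IsOpen G.units :=
  G.isLocalHomeomorph_src.isOpenMap.isOpen_range

lemma exists_compact_open (hG : G.AmpleUnits) {C : Set A} (hC : IsCompact C)
    (hCu : C ⊆ G.units) :
    ∃ K : Set A, IsCompact K ∧ IsOpen K ∧ C ⊆ K ∧ K ⊆ G.units := by
  classical
  have h : ∀ a : A, a ∈ C → ∃ K : Set A, IsCompact K ∧ IsOpen K ∧ a ∈ K ∧
      K ⊆ G.units ∩ G.units :=
    fun a ha => hG G.units G.isOpen_units a ⟨hCu ha, hCu ha⟩
  choose K hKc hKo hKa hKu using h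
  obtain ⟨t, ht⟩ := hC.elim_finite_subcover (fun a : C => K a a.2)
    (fun a => hKo a a.2) (fun y hy => Set.mem_iUnion.2 ⟨⟨y, hy⟩, hKa y hy⟩)
  refine ⟨⋃ a ∈ t, K a a.2, ?_, ?_, ?_, ?_⟩
  · exact t.finite_toSet.isCompact_biUnion (fun a _ => hKc a a.2)
  · exact isOpen_biUnion (fun a _ => hKo a a.2)
  · exact ht
  · intro y hy
    obtain ⟨a, hat, hya⟩ := Set.mem_iUnion₂.1 hy
    exact (hKu a a.2 hya).1

lemma inDiag_indicator [T2Space A] {K : Set A} (hKc : IsCompact K)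
    (hKo : IsOpen K) (hKu : K ⊆ G.units) :
    G.InDiag (Set.indicator K (fun _ => (1 : R))) := by
  classical
  have hKcl : IsClosed K := hKc.isClosed
  have hsupp : Function.support (Set.indicator K (fun _ => (1 : R))) ⊆ K := by
    intro a ha
    by_contra h
    exact ha (Set.indicator_of_notMem h _)
  refine ⟨⟨?_, ?_⟩, fun a ha => hKu (hsupp ha)⟩
  · intro s
    by_cases h1 : (1 : R) ∈ s <;> by_cases h0 : (0 : R) ∈ s
    · convert isOpen_univ
      ext a
      simp only [Set.mem_preimage, Set.mem_univ, iff_true]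
      by_cases ha : a ∈ K
      · rw [Set.indicator_of_mem ha]; exact h1
      · rw [Set.indicator_of_notMem ha]; exact h0
    · convert hKo
      ext a
      simp only [Set.mem_preimage]
      by_cases ha : a ∈ K
      · simp [Set.indicator_of_mem ha, h1, ha]
      · simp [Set.indicator_of_notMem ha, h0, ha]
    · convert hKcl.isOpen_compl
      ext a
      simp only [Set.mem_preimage, Set.mem_compl_iff]
      by_cases ha : a ∈ K
      · simp [Set.indicator_of_mem ha, h1, ha]
      · simp [Set.indicator_of_notMem ha, h0, ha]
    · convert isOpen_empty
      ext a
      simp only [Set.mem_preimage, Set.mem_empty_iff_false, iff_false]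
      by_cases ha : a ∈ K
      · rw [Set.indicator_of_mem ha]; exact h1
      · rw [Set.indicator_of_notMem ha]; exact h0
  · rcases eq_or_ne (1 : R) 0 with h | h
    · have : Function.support (Set.indicator K (fun _ => (1 : R))) = ∅ := by
        ext a
        simp only [Function.mem_support, Set.mem_empty_iff_false, iff_false,
          not_not]
        by_cases ha : a ∈ K
        · rw [Set.indicator_of_mem ha]; exact h
        · exact Set.indicator_of_notMem ha _
      rw [this]; exact isCompact_empty
    · have : Function.support (Set.indicator K (fun _ => (1 : R))) = K := by
        apply le_antisymm hsupp
        intro a ha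
        rw [Function.mem_support, Set.indicator_of_mem ha]
        exact h
      rw [this]; exact hKc

lemma conv_indicator_right (f : A → R) {K : Set A} (hKu : K ⊆ G.units)
    (h : G.src '' Function.support f ⊆ K) :
    G.conv f (Set.indicator K (fun _ => (1 : R))) = f := by
  funext γ
  rw [G.conv_diag_right f _ (fun a ha => hKu (by
    by_contra hK
    exact ha (Set.indicator_of_notMem hK _)))]
  rcases eq_or_ne (f γ) 0 with h0 | h0
  · rw [h0, zero_mul]
  · rw [Set.indicator_of_mem (h ⟨γ, h0, rfl⟩), mul_one]

end AmpleGroupoid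
open AmpleGroupoid in
/-- Over an indecomposable commutative ring `R`, if `m` belongs to
the normalizer of the diagonal of the convolution algebra of a Hausdorff ample
groupoid (witnessed by `m'`), then `m'm = χ_{d(supp m)}` and `mm' = χ_{r(supp m)}`. -/
theorem stmt16 {A : Type*} [TopologicalSpace A] [T2Space A]
    {R : Type*} [CommRing R]
    (hR : ∀ e : R, e * e = e → e = 0 ∨ e = 1)
    (G : AmpleGroupoid A) (hG : G.AmpleUnits)
    (m m' : A → R) (hm : InRG m) (hm' : InRG m')
    (h1 : G.conv (G.conv m m') m = m) (h2 : G.conv (G.conv m' m) m' = m')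
    (h3 : ∀ d : A → R, G.InDiag d → G.InDiag (G.conv (G.conv m d) m'))
    (h4 : ∀ d : A → R, G.InDiag d → G.InDiag (G.conv (G.conv m' d) m)) :
    G.conv m' m = Set.indicator (G.src '' Function.support m) (fun _ => (1 : R)) ∧
    G.conv m m' = Set.indicator (G.rng '' Function.support m) (fun _ => (1 : R)) := by
  classical
  have hsrc_cont := G.isLocalHomeomorph_src.continuous
  obtain ⟨K, hKc, hKo, hKm, hKu⟩ := G.exists_compact_open hG
    (hm.2.image hsrc_cont) (by rintro _ ⟨a, _, rfl⟩; exact G.src_mem_units a)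
  obtain ⟨K', hK'c, hK'o, hKm', hK'u⟩ := G.exists_compact_open hG
    (hm'.2.image hsrc_cont) (by rintro _ ⟨a, _, rfl⟩; exact G.src_mem_units a)
  have hmi : G.conv m (Set.indicator K (fun _ => (1 : R))) = m :=
    G.conv_indicator_right m hKu hKm
  have hm'i : G.conv m' (Set.indicator K' (fun _ => (1 : R))) = m' :=
    G.conv_indicator_right m' hK'u hKm'
  have hfD : G.InDiag (G.conv m m') := by
    have := h3 _ (G.inDiag_indicator hKc hKo hKu)
    rwa [hmi] at this
  have heD : G.InDiag (G.conv m' m) := by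
    have := h4 _ (G.inDiag_indicator hK'c hK'o hK'u)
    rwa [hm'i] at this
  set e := G.conv m' m with he
  set f := G.conv m m' with hf
  have fbm := fun x => G.fiber_finite hm.2 x
  have fbm' := fun x => G.fiber_finite hm'.2 x
  have hme : G.conv m e = m := by
    rw [he, ← G.conv_assoc m m' m fbm' fbm]
    exact h1
  have hee : G.conv e e = e := by
    have h5 := G.conv_assoc e m' m fbm' fbm
    rw [h2] at h5
    exact h5.symm.trans he.symm
  have hff : G.conv f f = f := by
    have h5 := G.conv_assoc f m m' fbm fbm'
    rw [h1] at h5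
    exact h5.symm.trans hf.symm
  have heval : ∀ u, e u * e u = e u := by
    intro u
    by_cases hu : u ∈ G.units
    · have h5 := G.conv_diag_right e e heD.2 u
      rw [hee, G.src_unit hu] at h5
      exact h5.symm
    · have h0 : e u = 0 := by
        by_contra h
        exact hu (heD.2 h)
      rw [h0, mul_zero]
  have hfval : ∀ u, f u * f u = f u := by
    intro u
    by_cases hu : u ∈ G.units
    · have h5 := G.conv_diag_right f f hfD.2 u
      rw [hff, G.src_unit hu] at h5
      exact h5.symm
    · have h0 : f u = 0 := by
        by_contra h
        exact hu (hfD.2 h)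
      rw [h0, mul_zero]
  have hesupp : Function.support e = G.src '' Function.support m := by
    apply Set.Subset.antisymm
    · intro u hu
      have huu : u ∈ G.units := heD.2 hu
      rw [Function.mem_support, he, conv_apply] at hu
      obtain ⟨α, hαs, hαne⟩ := exists_ne_zero_of_finsum_mem_ne_zero hu
      rw [Set.mem_setOf_eq] at hαs
      have hmα : m α ≠ 0 := fun h0 => hαne (by rw [h0, mul_zero])
      exact ⟨α, hmα, by rw [hαs, G.src_unit huu]⟩
    · rintro _ ⟨γ, hγ, rfl⟩
      rw [Function.mem_support]
      intro h0
      apply hγ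
      have h5 := G.conv_diag_right m e heD.2 γ
      rw [hme] at h5
      rw [h5, h0, mul_zero]
  have hfsupp : Function.support f = G.rng '' Function.support m := by
    apply Set.Subset.antisymm
    · intro u hu
      have huu : u ∈ G.units := hfD.2 hu
      rw [Function.mem_support, hf, conv_apply] at hu
      obtain ⟨α, hαs, hαne⟩ := exists_ne_zero_of_finsum_mem_ne_zero hu
      rw [Set.mem_setOf_eq] at hαs
      have hmδ : m (G.comp u (G.inv α)) ≠ 0 := fun h0 => hαne (by rw [h0, zero_mul])
      refine ⟨G.comp u (G.inv α), hmδ, ?_⟩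
      rw [G.rng_comp u (G.inv α) (by rw [G.rng_inv, hαs, G.src_unit huu]),
        G.rng_unit huu]
    · rintro _ ⟨γ, hγ, rfl⟩
      rw [Function.mem_support]
      intro h0
      apply hγ
      have h5 := G.conv_diag_left f m hfD.2 γ
      rw [h1] at h5
      rw [h5, h0, zero_mul]
  constructor
  · funext a
    by_cases ha : a ∈ G.src '' Function.support m
    · rw [Set.indicator_of_mem ha]
      have hne : e a ≠ 0 := by
        rw [← Function.mem_support, hesupp]
        exact ha
      rcases hR (e a) (heval a) with h | h
      · exact absurd h hne
      · exact h
    · rw [Set.indicator_of_notMem ha]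
      by_contra h
      exact ha (hesupp ▸ Function.mem_support.2 h)
  · funext a
    by_cases ha : a ∈ G.rng '' Function.support m
    · rw [Set.indicator_of_mem ha]
      have hne : f a ≠ 0 := by
        rw [← Function.mem_support, hfsupp]
        exact ha
      rcases hR (f a) (hfval a) with h | h
      · exact absurd h hne
      · exact h
    · rw [Set.indicator_of_notMem ha]
      by_contra h
      exact ha (hfsupp ▸ Function.mem_support.2 h)
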